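/- For a bounded linear operator T on a complex Banach space, σ(T)\σ_e(T) ⊆ σ_a(T) if and only if σ(T)\σ_bf(T) ⊆ σ_a(T). -/

import Mathlib

open Filter Topology

variable {X : Type*} [NormedAddCommGroup X] [NormedSpace ℂ X] [CompleteSpace X]

/-- `S` is a Fredholm operator. -/
def IsFredholm (S : X →L[ℂ] X) : Prop :=
  FiniteDimensional ℂ (LinearMap.ker ((S : X →L[ℂ] X) : X →ₗ[ℂ] X)) ∧
  IsClosed ((LinearMap.range ((S : X →L[ℂ] X) : X →ₗ[ℂ] X) : Submodule ℂ X) : Set X) ∧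
  FiniteDimensional ℂ (X ⧸ LinearMap.range ((S : X →L[ℂ] X) : X →ₗ[ℂ] X))

/-- `S` is a Weyl operator: Fredholm of index zero. -/
def IsWeyl (S : X →L[ℂ] X) : Prop :=
  IsFredholm S ∧
  Module.finrank ℂ (LinearMap.ker ((S : X →L[ℂ] X) : X →ₗ[ℂ] X)) = Module.finrank ℂ (X ⧸ LinearMap.range ((S : X →L[ℂ] X) : X →ₗ[ℂ] X))

/-- `S` is a B-Fredholm operator: for some `n`, `R(S^n)` is closed and the restriction
`S_[n] : R(S^n) → R(S^n)` is Fredholm (its kernel is `ker S ⊓ R(S^n)`, its range is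
`R(S^(n+1))`). -/
def IsBFredholm (S : X →L[ℂ] X) : Prop :=
  ∃ n : ℕ, IsClosed ((LinearMap.range ((S ^ n : X →L[ℂ] X) : X →ₗ[ℂ] X) : Submodule ℂ X) : Set X) ∧
    IsClosed ((LinearMap.range ((S ^ (n + 1) : X →L[ℂ] X) : X →ₗ[ℂ] X) : Submodule ℂ X) : Set X) ∧
    FiniteDimensional ℂ ↥(LinearMap.ker ((S : X →L[ℂ] X) : X →ₗ[ℂ] X) ⊓ LinearMap.range ((S ^ n : X →L[ℂ] X) : X →ₗ[ℂ] X)) ∧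
    FiniteDimensional ℂ (↥(LinearMap.range ((S ^ n : X →L[ℂ] X) : X →ₗ[ℂ] X)) ⧸
      Submodule.comap (LinearMap.range ((S ^ n : X →L[ℂ] X) : X →ₗ[ℂ] X)).subtype (LinearMap.range ((S ^ (n + 1) : X →L[ℂ] X) : X →ₗ[ℂ] X)))

/-- `S` is a B-Weyl operator: B-Fredholm of index zero. -/
def IsBWeyl (S : X →L[ℂ] X) : Prop :=
  ∃ n : ℕ, IsClosed ((LinearMap.range ((S ^ n : X →L[ℂ] X) : X →ₗ[ℂ] X) : Submodule ℂ X) : Set X) ∧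
    IsClosed ((LinearMap.range ((S ^ (n + 1) : X →L[ℂ] X) : X →ₗ[ℂ] X) : Submodule ℂ X) : Set X) ∧
    FiniteDimensional ℂ ↥(LinearMap.ker ((S : X →L[ℂ] X) : X →ₗ[ℂ] X) ⊓ LinearMap.range ((S ^ n : X →L[ℂ] X) : X →ₗ[ℂ] X)) ∧
    FiniteDimensional ℂ (↥(LinearMap.range ((S ^ n : X →L[ℂ] X) : X →ₗ[ℂ] X)) ⧸
      Submodule.comap (LinearMap.range ((S ^ n : X →L[ℂ] X) : X →ₗ[ℂ] X)).subtype (LinearMap.range ((S ^ (n + 1) : X →L[ℂ] X) : X →ₗ[ℂ] X))) ∧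
    Module.finrank ℂ ↥(LinearMap.ker ((S : X →L[ℂ] X) : X →ₗ[ℂ] X) ⊓ LinearMap.range ((S ^ n : X →L[ℂ] X) : X →ₗ[ℂ] X)) =
      Module.finrank ℂ (↥(LinearMap.range ((S ^ n : X →L[ℂ] X) : X →ₗ[ℂ] X)) ⧸
        Submodule.comap (LinearMap.range ((S ^ n : X →L[ℂ] X) : X →ₗ[ℂ] X)).subtype (LinearMap.range ((S ^ (n + 1) : X →L[ℂ] X) : X →ₗ[ℂ] X)))

/-- `S` has finite ascent. -/
def HasFiniteAscent (S : X →L[ℂ] X) : Prop :=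
  ∃ n : ℕ, LinearMap.ker ((S ^ n : X →L[ℂ] X) : X →ₗ[ℂ] X) = LinearMap.ker ((S ^ (n + 1) : X →L[ℂ] X) : X →ₗ[ℂ] X)

/-- `S` has finite descent. -/
def HasFiniteDescent (S : X →L[ℂ] X) : Prop :=
  ∃ n : ℕ, LinearMap.range ((S ^ n : X →L[ℂ] X) : X →ₗ[ℂ] X) = LinearMap.range ((S ^ (n + 1) : X →L[ℂ] X) : X →ₗ[ℂ] X)

/-- The approximate point spectrum of `T`: points `λ` where `T - λ` is not bounded below. -/
def sigma_a (T : X →L[ℂ] X) : Set ℂ :=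
  {l : ℂ | ¬ ∃ c > (0 : ℝ), ∀ x : X, c * ‖x‖ ≤ ‖(T - l • 1) x‖}

/-- The essential spectrum of `T`. -/
def sigma_e (T : X →L[ℂ] X) : Set ℂ := {l : ℂ | ¬ IsFredholm (T - l • 1)}

/-- The Weyl spectrum of `T`. -/
def sigma_w (T : X →L[ℂ] X) : Set ℂ := {l : ℂ | ¬ IsWeyl (T - l • 1)}

/-- The B-Fredholm spectrum of `T`. -/
def sigma_bf (T : X →L[ℂ] X) : Set ℂ := {l : ℂ | ¬ IsBFredholm (T - l • 1)}

/-- The B-Weyl spectrum of `T`. -/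
def sigma_bw (T : X →L[ℂ] X) : Set ℂ := {l : ℂ | ¬ IsBWeyl (T - l • 1)}

/-- The poles of the resolvent of `T`: spectral points with finite ascent and descent. -/
def poles (T : X →L[ℂ] X) : Set ℂ :=
  {l : ℂ | l ∈ spectrum ℂ T ∧ HasFiniteAscent (T - l • 1) ∧ HasFiniteDescent (T - l • 1)}

/-- The poles of `T` of finite rank. -/
def poles0 (T : X →L[ℂ] X) : Set ℂ :=
  {l : ℂ | l ∈ poles T ∧ FiniteDimensional ℂ (LinearMap.ker ((T - l • 1 : X →L[ℂ] X) : X →ₗ[ℂ] X))}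

/-- The left poles of `T`: points `λ ∈ σ_a(T)` with `p = p(T-λ) < ∞` and `R((T-λ)^(p+1))`
closed. -/
def leftPoles (T : X →L[ℂ] X) : Set ℂ :=
  {l : ℂ | l ∈ sigma_a T ∧ ∃ p : ℕ,
    LinearMap.ker (((T - l • 1) ^ p : X →L[ℂ] X) : X →ₗ[ℂ] X) = LinearMap.ker (((T - l • 1) ^ (p + 1) : X →L[ℂ] X) : X →ₗ[ℂ] X) ∧
    (∀ m : ℕ, m < p → LinearMap.ker (((T - l • 1) ^ m : X →L[ℂ] X) : X →ₗ[ℂ] X) ≠ LinearMap.ker (((T - l • 1) ^ (m + 1) : X →L[ℂ] X) : X →ₗ[ℂ] X)) ∧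
    IsClosed ((LinearMap.range (((T - l • 1) ^ (p + 1) : X →L[ℂ] X) : X →ₗ[ℂ] X) : Submodule ℂ X) : Set X)}

/-- The left poles of `T` of finite rank. -/
def leftPoles0 (T : X →L[ℂ] X) : Set ℂ :=
  {l : ℂ | l ∈ leftPoles T ∧ FiniteDimensional ℂ (LinearMap.ker ((T - l • 1 : X →L[ℂ] X) : X →ₗ[ℂ] X))}

/-- The isolated points of a subset of `ℂ`. -/
def isoPts (A : Set ℂ) : Set ℂ := {l : ℂ | l ∈ A ∧ ¬ AccPt l (𝓟 A)}

/-- `E(T)`: isolated spectral points that are eigenvalues. -/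
def Eset (T : X →L[ℂ] X) : Set ℂ :=
  {l : ℂ | l ∈ isoPts (spectrum ℂ T) ∧ LinearMap.ker ((T - l • 1 : X →L[ℂ] X) : X →ₗ[ℂ] X) ≠ ⊥}

/-- `E⁰(T)`: isolated spectral points that are eigenvalues of finite multiplicity. -/
def Eset0 (T : X →L[ℂ] X) : Set ℂ :=
  {l : ℂ | l ∈ isoPts (spectrum ℂ T) ∧ LinearMap.ker ((T - l • 1 : X →L[ℂ] X) : X →ₗ[ℂ] X) ≠ ⊥ ∧
    FiniteDimensional ℂ (LinearMap.ker ((T - l • 1 : X →L[ℂ] X) : X →ₗ[ℂ] X))}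

/-- `E_a(T)`: isolated points of the approximate point spectrum that are eigenvalues. -/
def Ea (T : X →L[ℂ] X) : Set ℂ :=
  {l : ℂ | l ∈ isoPts (sigma_a T) ∧ LinearMap.ker ((T - l • 1 : X →L[ℂ] X) : X →ₗ[ℂ] X) ≠ ⊥}

/-- `E_a⁰(T)`: isolated points of `σ_a(T)` that are eigenvalues of finite multiplicity. -/
def Ea0 (T : X →L[ℂ] X) : Set ℂ :=
  {l : ℂ | l ∈ isoPts (sigma_a T) ∧ LinearMap.ker ((T - l • 1 : X →L[ℂ] X) : X →ₗ[ℂ] X) ≠ ⊥ ∧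
    FiniteDimensional ℂ (LinearMap.ker ((T - l • 1 : X →L[ℂ] X) : X →ₗ[ℂ] X))}


/-- Auxiliary map induced by `S^n` from `X ⧸ R(S)` to `R(S^n) ⧸ R(S^(n+1))`. -/
noncomputable def auxMap (S : X →L[ℂ] X) (n : ℕ) :
    (X ⧸ LinearMap.range ((S : X →L[ℂ] X) : X →ₗ[ℂ] X)) →ₗ[ℂ] (↥(LinearMap.range ((S ^ n : X →L[ℂ] X) : X →ₗ[ℂ] X)) ⧸
      Submodule.comap (LinearMap.range ((S ^ n : X →L[ℂ] X) : X →ₗ[ℂ] X)).subtype (LinearMap.range ((S ^ (n + 1) : X →L[ℂ] X) : X →ₗ[ℂ] X))) :=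
  Submodule.liftQ _ ((Submodule.mkQ _).comp
    (((S ^ n : X →L[ℂ] X) : X →ₗ[ℂ] X).codRestrict _ (fun x => ⟨x, rfl⟩)))
    (by
      rintro x ⟨y, rfl⟩
      simp only [LinearMap.mem_ker, LinearMap.comp_apply, Submodule.mkQ_apply,
        Submodule.Quotient.mk_eq_zero, Submodule.mem_comap]
      exact ⟨y, by simp [pow_succ, ContinuousLinearMap.mul_apply]⟩)

theorem auxMap_surjective (S : X →L[ℂ] X) (n : ℕ) : Function.Surjective (auxMap S n) := by
  rw [← LinearMap.range_eq_top, auxMap, Submodule.range_liftQ, LinearMap.range_eq_top]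
  rintro ⟨⟨_, x, rfl⟩⟩
  exact ⟨x, rfl⟩

theorem auxMap_injective (S : X →L[ℂ] X) (n : ℕ) (hS : Function.Injective S) :
    Function.Injective (auxMap S n) := by
  rw [← LinearMap.ker_eq_bot, auxMap, Submodule.ker_liftQ_eq_bot]
  intro x hx
  simp only [LinearMap.mem_ker, LinearMap.comp_apply, Submodule.mkQ_apply,
    Submodule.Quotient.mk_eq_zero, Submodule.mem_comap] at hx
  obtain ⟨y, hy⟩ := hx
  have hn : Function.Injective ⇑(S ^ n : X →L[ℂ] X) := by
    rw [FunLike.coe_pow_eq_iterate]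
    exact hS.iterate n
  have hy' : (S ^ n) (S y) = (S ^ n) x := by
    rw [← ContinuousLinearMap.mul_apply, ← pow_succ]
    exact hy
  exact ⟨y, (hn hy').symm ▸ rfl⟩

/-- `σ(T)\σ_e(T) ⊆ σ_a(T)` iff `σ(T)\σ_bf(T) ⊆ σ_a(T)`. -/
theorem stmt2 (T : X →L[ℂ] X) :
    spectrum ℂ T \ sigma_e T ⊆ sigma_a T ↔ spectrum ℂ T \ sigma_bf T ⊆ sigma_a T := by
  constructor
  · -- forward: σ\σ_e ⊆ σ_a → σ\σ_bf ⊆ σ_a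
    rintro h l ⟨hspec, hbf⟩
    by_contra hla
    obtain ⟨c, hc, hbound⟩ := not_not.mp hla
    set S : X →L[ℂ] X := T - l • 1 with hSdef
    have hinj : Function.Injective ⇑S := by
      intro x y hxy
      have h0 : S (x - y) = 0 := by rw [map_sub, hxy, sub_self]
      have hb := hbound (x - y)
      rw [h0, norm_zero] at hb
      have hle : ‖x - y‖ ≤ 0 := by nlinarith [norm_nonneg (x - y)]
      exact sub_eq_zero.mp (norm_le_zero_iff.mp hle)
    have hclosed : IsClosed ((LinearMap.range ((S : X →L[ℂ] X) : X →ₗ[ℂ] X) : Submodule ℂ X) : Set X) := by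
      have hanti : AntilipschitzWith ⟨c, hc.le⟩⁻¹ ⇑S := by
        apply ContinuousLinearMap.antilipschitz_of_bound S
        intro x
        have : (↑(⟨c, hc.le⟩⁻¹ : NNReal) : ℝ) = c⁻¹ := rfl
        rw [this, ← div_eq_inv_mul, le_div_iff₀ hc, mul_comm]
        exact hbound x
      have := hanti.isClosed_range S.uniformContinuous
      simpa [Set.range, LinearMap.coe_range] using this
    obtain ⟨n, h1, h2, h3, h4⟩ := not_not.mp hbf
    have hFred : IsFredholm S := by
      refine ⟨?_, hclosed, ?_⟩
      · have hk : LinearMap.ker ((S : X →L[ℂ] X) : X →ₗ[ℂ] X) = ⊥ := LinearMap.ker_eq_bot.mpr hinj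
        rw [hk]; infer_instance
      · haveI := h4
        exact FiniteDimensional.of_injective (auxMap S n) (auxMap_injective S n hinj)
    exact hla (h ⟨hspec, fun hne => hne hFred⟩)
  · -- reverse: Fredholm ⇒ B-Fredholm with n = 0
    rintro h l ⟨hspec, he⟩
    refine h ⟨hspec, fun hnbf => hnbf ?_⟩
    have hF : IsFredholm (T - l • 1) := not_not.mp he
    set S : X →L[ℂ] X := T - l • 1 with hSdef
    refine ⟨0, ?_, ?_, ?_, ?_⟩
    · have : LinearMap.range ((S ^ 0 : X →L[ℂ] X) : X →ₗ[ℂ] X) = ⊤ := by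
        rw [pow_zero, ContinuousLinearMap.one_def]
        exact LinearMap.range_eq_top.mpr fun x => ⟨x, rfl⟩
      rw [this]
      exact isClosed_univ
    · rw [pow_one]
      exact hF.2.1
    · have : LinearMap.ker ((S : X →L[ℂ] X) : X →ₗ[ℂ] X) ⊓ LinearMap.range ((S ^ 0 : X →L[ℂ] X) : X →ₗ[ℂ] X) = LinearMap.ker ((S : X →L[ℂ] X) : X →ₗ[ℂ] X) := by
        rw [pow_zero, ContinuousLinearMap.one_def]
        exact inf_eq_left.mpr fun x _ => ⟨x, rfl⟩
      rw [this]
      exact hF.1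
    · haveI := hF.2.2
      exact Module.Finite.of_surjective (auxMap S 0) (auxMap_surjective S 0)
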